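/- Let (x1, x2, z1) be a point satisfying q·F′(x1·p(x1 + x2) − z1) = (1 − q)·σ and suppose F″(x1·p(x1 + x2) − z1) > 0. Then the inequality (In2): P_{x1x1}·P_{z1z1} − (P_{x1z1})² > |P_{x1x2}·P_{z1z1} − P_{x1z1}·P_{x2z1}| holds at this point if and only if −(2·p′(x1 + x2) + x1·p″(x1 + x2) − C″(x1)/(1 − σ)) > |p′(x1 + x2) + x1·p″(x1 + x2)|, where subscripts on P denote iterated partial derivatives evaluated at (x1, x2, z1). -/

import Mathlib

/-- The profit function
`P(x1, x2, z1) = (1 - qσ) x1 p(x1+x2) - C(x1) - (1-q)σ z1 - q F(x1 p(x1+x2) - z1)`. -/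
noncomputable def P (σ q : ℝ) (p C F : ℝ → ℝ) (x1 x2 z1 : ℝ) : ℝ :=
  (1 - q * σ) * x1 * p (x1 + x2) - C x1 - (1 - q) * σ * z1
    - q * F (x1 * p (x1 + x2) - z1)

/-- `∂²P/∂x1²` at `(x1, x2, z1)`. -/
noncomputable def Px1x1 (σ q : ℝ) (p C F : ℝ → ℝ) (x1 x2 z1 : ℝ) : ℝ :=
  deriv (deriv (fun v => P σ q p C F v x2 z1)) x1

/-- `∂²P/∂z1²` at `(x1, x2, z1)`. -/
noncomputable def Pz1z1 (σ q : ℝ) (p C F : ℝ → ℝ) (x1 x2 z1 : ℝ) : ℝ :=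
  deriv (deriv (fun w => P σ q p C F x1 x2 w)) z1

/-- `∂²P/∂x1∂z1` at `(x1, x2, z1)` (first differentiate in `x1`, then in `z1`). -/
noncomputable def Px1z1 (σ q : ℝ) (p C F : ℝ → ℝ) (x1 x2 z1 : ℝ) : ℝ :=
  deriv (fun w => deriv (fun v => P σ q p C F v x2 w) x1) z1

/-- `∂²P/∂x1∂x2` at `(x1, x2, z1)` (first differentiate in `x1`, then in `x2`). -/
noncomputable def Px1x2 (σ q : ℝ) (p C F : ℝ → ℝ) (x1 x2 z1 : ℝ) : ℝ :=
  deriv (fun u => deriv (fun v => P σ q p C F v u z1) x1) x2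

/-- `∂²P/∂x2∂z1` at `(x1, x2, z1)` (first differentiate in `x2`, then in `z1`). -/
noncomputable def Px2z1 (σ q : ℝ) (p C F : ℝ → ℝ) (x1 x2 z1 : ℝ) : ℝ :=
  deriv (fun w => deriv (fun u => P σ q p C F x1 u w) x2) z1

/-- at a point satisfying the first-order condition for `z1` with
`F'' > 0` there, inequality (In2) holds iff
`-(2p' + x1 p'' - C''/(1-σ)) > |p' + x1 p''|`. -/
theorem stmt_2 (σ q : ℝ) (hσ0 : 0 < σ) (hσ1 : σ < 1) (hq0 : 0 < q) (hq1 : q < 1)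
    (p C F : ℝ → ℝ) (hp : ContDiff ℝ 2 p) (hC : ContDiff ℝ 2 C) (hF : ContDiff ℝ 2 F)
    (x1 x2 z1 : ℝ)
    (hfoc2 : q * deriv F (x1 * p (x1 + x2) - z1) = (1 - q) * σ)
    (hF2 : 0 < deriv (deriv F) (x1 * p (x1 + x2) - z1)) :
    (Px1x1 σ q p C F x1 x2 z1 * Pz1z1 σ q p C F x1 x2 z1
        - (Px1z1 σ q p C F x1 x2 z1) ^ 2
      > |Px1x2 σ q p C F x1 x2 z1 * Pz1z1 σ q p C F x1 x2 z1
          - Px1z1 σ q p C F x1 x2 z1 * Px2z1 σ q p C F x1 x2 z1|)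
    ↔ (-(2 * deriv p (x1 + x2) + x1 * deriv (deriv p) (x1 + x2)
          - deriv (deriv C) x1 / (1 - σ))
        > |deriv p (x1 + x2) + x1 * deriv (deriv p) (x1 + x2)|) := by
  -- basic differentiability facts
  have hpd : Differentiable ℝ p := hp.differentiable two_ne_zero
  have hCd : Differentiable ℝ C := hC.differentiable two_ne_zero
  have hFd : Differentiable ℝ F := hF.differentiable two_ne_zero
  have hpd' : Differentiable ℝ (deriv p) := by
    have h : ContDiff ℝ ((1:ℕ)+1) p := by exact_mod_cast hp
    exact (contDiff_succ_iff_deriv.mp h).2.2.differentiable one_ne_zero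
  have hCd' : Differentiable ℝ (deriv C) := by
    have h : ContDiff ℝ ((1:ℕ)+1) C := by exact_mod_cast hC
    exact (contDiff_succ_iff_deriv.mp h).2.2.differentiable one_ne_zero
  have hFd' : Differentiable ℝ (deriv F) := by
    have h : ContDiff ℝ ((1:ℕ)+1) F := by exact_mod_cast hF
    exact (contDiff_succ_iff_deriv.mp h).2.2.differentiable one_ne_zero
  -- derivative of v ↦ v * p (v + u)
  have hg : ∀ u v : ℝ, HasDerivAt (fun v => v * p (v + u))
      (p (v+u) + v * deriv p (v+u)) v := by
    intro u v
    have h1 : HasDerivAt (fun v => p (v + u)) (deriv p (v+u)) v := by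
      simpa [Function.comp_def] using
        ((hpd (v+u)).hasDerivAt).comp v ((hasDerivAt_id v).add_const u)
    simpa [Pi.mul_def] using (hasDerivAt_id v).mul h1
  -- first partial in the first variable
  have hPv : ∀ u w v : ℝ, HasDerivAt (fun v => P σ q p C F v u w)
      ((1 - q*σ) * (p (v+u) + v * deriv p (v+u)) - deriv C v
        - q * (deriv F (v * p (v+u) - w) * (p (v+u) + v * deriv p (v+u)))) v := by
    intro u w v
    have h1 := (hg u v).const_mul (1 - q*σ)
    have h2 := (hCd v).hasDerivAt
    have h3 : HasDerivAt (fun v => F (v * p (v+u) - w))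
        (deriv F (v * p (v+u) - w) * (p (v+u) + v * deriv p (v+u))) v := by
      simpa [Function.comp_def] using
        ((hFd (v * p (v+u) - w)).hasDerivAt).comp v ((hg u v).sub_const w)
    have h4 := ((h1.sub h2).sub_const ((1-q)*σ*w)).sub (h3.const_mul q)
    simpa [P, mul_assoc, Pi.sub_def] using h4
  have hPvd : ∀ u w v : ℝ, deriv (fun v => P σ q p C F v u w) v
      = (1 - q*σ) * (p (v+u) + v * deriv p (v+u)) - deriv C v
        - q * (deriv F (v * p (v+u) - w) * (p (v+u) + v * deriv p (v+u))) :=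
    fun u w v => (hPv u w v).deriv
  -- Px1x1
  have hx1x1 : Px1x1 σ q p C F x1 x2 z1
      = (1-σ) * (2 * deriv p (x1+x2) + x1 * deriv (deriv p) (x1+x2))
        - deriv (deriv C) x1
        - q * deriv (deriv F) (x1 * p (x1+x2) - z1)
            * (p (x1+x2) + x1 * deriv p (x1+x2))^2 := by
    have heq : deriv (fun v => P σ q p C F v x2 z1) = fun v =>
        (1 - q*σ) * (p (v+x2) + v * deriv p (v+x2)) - deriv C v
          - q * (deriv F (v * p (v+x2) - z1) * (p (v+x2) + v * deriv p (v+x2))) :=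
      funext (hPvd x2 z1)
    have hsd : HasDerivAt (fun v => p (v+x2) + v * deriv p (v+x2))
        (deriv p (x1+x2) + (deriv p (x1+x2) + x1 * deriv (deriv p) (x1+x2))) x1 := by
      have h1 : HasDerivAt (fun v => p (v + x2)) (deriv p (x1+x2)) x1 := by
        simpa [Function.comp_def] using
          ((hpd (x1+x2)).hasDerivAt).comp x1 ((hasDerivAt_id x1).add_const x2)
      have h2 : HasDerivAt (fun v => deriv p (v + x2)) (deriv (deriv p) (x1+x2)) x1 := by
        simpa [Function.comp_def] using
          ((hpd' (x1+x2)).hasDerivAt).comp x1 ((hasDerivAt_id x1).add_const x2)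
      simpa [Pi.add_def, Pi.mul_def] using h1.add ((hasDerivAt_id x1).mul h2)
    have h3 : HasDerivAt (fun v => deriv F (v * p (v+x2) - z1))
        (deriv (deriv F) (x1 * p (x1+x2) - z1)
          * (p (x1+x2) + x1 * deriv p (x1+x2))) x1 := by
      simpa [Function.comp_def] using
        ((hFd' (x1 * p (x1+x2) - z1)).hasDerivAt).comp x1 ((hg x2 x1).sub_const z1)
    have h4 : HasDerivAt (deriv C) (deriv (deriv C) x1) x1 := (hCd' x1).hasDerivAt
    have h5 := ((hsd.const_mul (1 - q*σ)).sub h4).sub ((h3.mul hsd).const_mul q)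
    erw [Px1x1, heq, h5.deriv]
    linear_combination (-(2 * deriv p (x1+x2) + x1 * deriv (deriv p) (x1+x2))) * hfoc2
  -- Pz1z1
  have hz1z1 : Pz1z1 σ q p C F x1 x2 z1
      = -(q * deriv (deriv F) (x1 * p (x1+x2) - z1)) := by
    have hPw : ∀ w : ℝ, HasDerivAt (fun w => P σ q p C F x1 x2 w)
        (-((1-q)*σ) + q * deriv F (x1 * p (x1+x2) - w)) w := by
      intro w
      have h1 : HasDerivAt (fun w => F (x1 * p (x1+x2) - w))
          (deriv F (x1 * p (x1+x2) - w) * (-1)) w := by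
        simpa [Function.comp_def] using
          ((hFd (x1 * p (x1+x2) - w)).hasDerivAt).comp w
            ((hasDerivAt_id w).const_sub (x1 * p (x1+x2)))
      have h2 := (((hasDerivAt_const w ((1 - q*σ) * x1 * p (x1+x2) - C x1)).sub
        ((hasDerivAt_id w).const_mul ((1-q)*σ))).sub (h1.const_mul q))
      have h3 : HasDerivAt (fun w => P σ q p C F x1 x2 w)
          (0 - (1-q)*σ*1 - q * (deriv F (x1 * p (x1+x2) - w) * (-1))) w := by
        simpa [P, mul_assoc, Pi.sub_def] using h2
      convert h3 using 1
      ring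
    have hPwd : deriv (fun w => P σ q p C F x1 x2 w)
        = fun w => -((1-q)*σ) + q * deriv F (x1 * p (x1+x2) - w) :=
      funext fun w => (hPw w).deriv
    have h2 : HasDerivAt (fun w => deriv F (x1 * p (x1+x2) - w))
        (deriv (deriv F) (x1 * p (x1+x2) - z1) * (-1)) z1 := by
      simpa [Function.comp_def] using
        ((hFd' (x1 * p (x1+x2) - z1)).hasDerivAt).comp z1
          ((hasDerivAt_id z1).const_sub (x1 * p (x1+x2)))
    have h3 := (h2.const_mul q).const_add (-((1-q)*σ))
    erw [Pz1z1, hPwd, h3.deriv]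
    ring
  -- Px1z1
  have hx1z1 : Px1z1 σ q p C F x1 x2 z1
      = q * deriv (deriv F) (x1 * p (x1+x2) - z1)
          * (p (x1+x2) + x1 * deriv p (x1+x2)) := by
    have heq : (fun w => deriv (fun v => P σ q p C F v x2 w) x1) = fun w =>
        (1 - q*σ) * (p (x1+x2) + x1 * deriv p (x1+x2)) - deriv C x1
          - q * (deriv F (x1 * p (x1+x2) - w) * (p (x1+x2) + x1 * deriv p (x1+x2))) :=
      funext fun w => hPvd x2 w x1
    have h2 : HasDerivAt (fun w => deriv F (x1 * p (x1+x2) - w))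
        (deriv (deriv F) (x1 * p (x1+x2) - z1) * (-1)) z1 := by
      simpa [Function.comp_def] using
        ((hFd' (x1 * p (x1+x2) - z1)).hasDerivAt).comp z1
          ((hasDerivAt_id z1).const_sub (x1 * p (x1+x2)))
    have h3 := (hasDerivAt_const z1
        ((1 - q*σ) * (p (x1+x2) + x1 * deriv p (x1+x2)) - deriv C x1)).sub
      ((h2.mul_const (p (x1+x2) + x1 * deriv p (x1+x2))).const_mul q)
    erw [Px1z1, heq, h3.deriv]
    ring
  -- Px1x2
  have hx1x2 : Px1x2 σ q p C F x1 x2 z1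
      = (1-σ) * (deriv p (x1+x2) + x1 * deriv (deriv p) (x1+x2))
        - q * deriv (deriv F) (x1 * p (x1+x2) - z1) * (x1 * deriv p (x1+x2))
            * (p (x1+x2) + x1 * deriv p (x1+x2)) := by
    have heq : (fun u => deriv (fun v => P σ q p C F v u z1) x1) = fun u =>
        (1 - q*σ) * (p (x1+u) + x1 * deriv p (x1+u)) - deriv C x1
          - q * (deriv F (x1 * p (x1+u) - z1) * (p (x1+u) + x1 * deriv p (x1+u))) :=
      funext fun u => hPvd u z1 x1
    have ha : HasDerivAt (fun u => p (x1 + u)) (deriv p (x1+x2)) x2 := by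
      simpa [Function.comp_def] using
        ((hpd (x1+x2)).hasDerivAt).comp x2 ((hasDerivAt_id x2).const_add x1)
    have hb : HasDerivAt (fun u => deriv p (x1 + u)) (deriv (deriv p) (x1+x2)) x2 := by
      simpa [Function.comp_def] using
        ((hpd' (x1+x2)).hasDerivAt).comp x2 ((hasDerivAt_id x2).const_add x1)
    have hc : HasDerivAt (fun u => x1 * p (x1 + u)) (x1 * deriv p (x1+x2)) x2 :=
      ha.const_mul x1
    have hd2 : HasDerivAt (fun u => deriv F (x1 * p (x1+u) - z1))
        (deriv (deriv F) (x1 * p (x1+x2) - z1) * (x1 * deriv p (x1+x2))) x2 := by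
      simpa [Function.comp_def] using
        ((hFd' (x1 * p (x1+x2) - z1)).hasDerivAt).comp x2 (hc.sub_const z1)
    have hs2 : HasDerivAt (fun u => p (x1+u) + x1 * deriv p (x1+u))
        (deriv p (x1+x2) + x1 * deriv (deriv p) (x1+x2)) x2 := ha.add (hb.const_mul x1)
    have h5 := ((hs2.const_mul (1 - q*σ)).sub_const (deriv C x1)).sub
      ((hd2.mul hs2).const_mul q)
    erw [Px1x2, heq, h5.deriv]
    linear_combination (-(deriv p (x1+x2) + x1 * deriv (deriv p) (x1+x2))) * hfoc2
  -- Px2z1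
  have hPu : ∀ w u : ℝ, HasDerivAt (fun u => P σ q p C F x1 u w)
      ((1 - q*σ) * (x1 * deriv p (x1+u))
        - q * (deriv F (x1 * p (x1+u) - w) * (x1 * deriv p (x1+u)))) u := by
    intro w u
    have ha : HasDerivAt (fun u => p (x1 + u)) (deriv p (x1+u)) u := by
      simpa [Function.comp_def] using
        ((hpd (x1+u)).hasDerivAt).comp u ((hasDerivAt_id u).const_add x1)
    have hc : HasDerivAt (fun u => x1 * p (x1 + u)) (x1 * deriv p (x1+u)) u :=
      ha.const_mul x1
    have h3 : HasDerivAt (fun u => F (x1 * p (x1+u) - w))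
        (deriv F (x1 * p (x1+u) - w) * (x1 * deriv p (x1+u))) u := by
      simpa [Function.comp_def] using
        ((hFd (x1 * p (x1+u) - w)).hasDerivAt).comp u (hc.sub_const w)
    have h4 := (((hc.const_mul (1 - q*σ)).sub_const (C x1)).sub_const
      ((1-q)*σ*w)).sub (h3.const_mul q)
    simpa [P, mul_assoc, Pi.sub_def] using h4
  have hx2z1 : Px2z1 σ q p C F x1 x2 z1
      = q * deriv (deriv F) (x1 * p (x1+x2) - z1) * (x1 * deriv p (x1+x2)) := by
    have heq : (fun w => deriv (fun u => P σ q p C F x1 u w) x2) = fun w =>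
        (1 - q*σ) * (x1 * deriv p (x1+x2))
          - q * (deriv F (x1 * p (x1+x2) - w) * (x1 * deriv p (x1+x2))) :=
      funext fun w => (hPu w x2).deriv
    have h2 : HasDerivAt (fun w => deriv F (x1 * p (x1+x2) - w))
        (deriv (deriv F) (x1 * p (x1+x2) - z1) * (-1)) z1 := by
      simpa [Function.comp_def] using
        ((hFd' (x1 * p (x1+x2) - z1)).hasDerivAt).comp z1
          ((hasDerivAt_id z1).const_sub (x1 * p (x1+x2)))
    have h3 := (hasDerivAt_const z1 ((1 - q*σ) * (x1 * deriv p (x1+x2)))).sub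
      ((h2.mul_const (x1 * deriv p (x1+x2))).const_mul q)
    erw [Px2z1, heq, h3.deriv]
    ring
  -- final algebra
  rw [hx1x1, hz1z1, hx1z1, hx1x2, hx2z1]
  set B := q * deriv (deriv F) (x1 * p (x1+x2) - z1) with hBdef
  have hBpos : 0 < B := mul_pos hq0 hF2
  have h1σ : (0:ℝ) < 1 - σ := by linarith
  set s := p (x1+x2) + x1 * deriv p (x1+x2) with hsdef
  set A := deriv p (x1+x2) + x1 * deriv (deriv p) (x1+x2) with hAdef
  set D := 2 * deriv p (x1+x2) + x1 * deriv (deriv p) (x1+x2) with hDdef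
  set K := deriv (deriv C) x1 with hKdef
  have e1 : ((1-σ) * D - K - B * s^2) * -B - (B * s)^2
      = (B * (1-σ)) * (-(D - K / (1-σ))) := by
    field_simp
    ring
  have e2 : |((1-σ) * A - B * (x1 * deriv p (x1+x2)) * s) * -B
        - B * s * (B * (x1 * deriv p (x1+x2)))| = (B * (1-σ)) * |A| := by
    have h : ((1-σ) * A - B * (x1 * deriv p (x1+x2)) * s) * -B
        - B * s * (B * (x1 * deriv p (x1+x2))) = (B * (1-σ)) * (-A) := by ring
    rw [h, abs_mul, abs_neg, abs_of_pos (by positivity)]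
  rw [e1, e2]
  exact mul_lt_mul_iff_right₀ (by positivity)
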